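/- Let ε_0 = 1/2 and ε_k = 1 for k ≥ 1. For all n ∈ ℕ and 0 ≤ x, y ≤ π with cos x ≠ cos y, ∑_{k=0}^{n} ε_k cos(ky) cos((n-k+1/2)x) = cos(x/2)·(sin(y/2)sin((n+1/2)y) - sin(x/2)sin((n+1/2)x))/(cos x - cos y). -/

import Mathlib

open Real Finset

private noncomputable def gtel (n : ℕ) (x y : ℝ) (i : ℕ) : ℝ :=
  (Real.cos (((i:ℝ)+1)*y) * Real.cos (((n:ℝ)-(i:ℝ)+1/2)*x)
    - Real.cos ((i:ℝ)*y) * Real.cos (((n:ℝ)-(i:ℝ)-1/2)*x))/2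

private lemma step (n i : ℕ) (x y : ℝ) :
    Real.cos (((i:ℝ)+1) * y) * Real.cos (((n:ℝ) - ((i:ℝ)+1) + 1/2) * x) *
      (Real.cos x - Real.cos y) = gtel n x y i - gtel n x y (i+1) := by
  unfold gtel
  push_cast
  have e0 : ((n:ℝ) - ((i:ℝ)+1) + 1/2) * x = ((n:ℝ) - i - 1/2) * x := by ring
  have e1 : ((n:ℝ) - (i:ℝ) + 1/2) * x = ((n:ℝ) - i - 1/2) * x + x := by ring
  have e2 : ((n:ℝ) - ((i:ℝ)+1) - 1/2) * x = ((n:ℝ) - i - 1/2) * x - x := by ring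
  have e3 : ((i:ℝ)+1+1) * y = ((i:ℝ)+1) * y + y := by ring
  have e4 : (i:ℝ) * y = ((i:ℝ)+1) * y - y := by ring
  rw [e0, e1, e2, e3, e4, Real.cos_add, Real.cos_sub, Real.cos_add, Real.cos_sub]
  ring

theorem sum_eps_cos_cos (n : ℕ) (x y : ℝ) (hx0 : 0 ≤ x) (hxπ : x ≤ π) (hy0 : 0 ≤ y)
    (hyπ : y ≤ π) (h : Real.cos x ≠ Real.cos y) :
    ∑ k ∈ Finset.range (n + 1),
        (if k = 0 then (1 / 2 : ℝ) else 1) * Real.cos ((k : ℝ) * y) *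
          Real.cos (((n : ℝ) - (k : ℝ) + 1 / 2) * x) =
      Real.cos (x / 2) *
        (Real.sin (y / 2) * Real.sin (((n : ℝ) + 1 / 2) * y) -
          Real.sin (x / 2) * Real.sin (((n : ℝ) + 1 / 2) * x)) /
        (Real.cos x - Real.cos y) := by
  rw [eq_div_iff (sub_ne_zero_of_ne h)]
  rw [Finset.sum_range_succ', add_mul, Finset.sum_mul]
  have hcongr : ∀ i ∈ Finset.range n,
      (if i + 1 = 0 then (1/2:ℝ) else 1) * Real.cos ((↑(i+1) : ℝ) * y) *
        Real.cos (((n:ℝ) - (↑(i+1):ℝ) + 1/2) * x) * (Real.cos x - Real.cos y)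
        = gtel n x y i - gtel n x y (i+1) := by
    intro i _
    rw [if_neg (Nat.succ_ne_zero i), one_mul]
    push_cast
    exact step n i x y
  rw [Finset.sum_congr rfl hcongr, Finset.sum_range_sub' (gtel n x y)]
  unfold gtel
  push_cast
  norm_num
  have hsx : Real.sin x = 2 * Real.sin (x/2) * Real.cos (x/2) := by
    have := Real.sin_two_mul (x/2); rwa [show 2*(x/2) = x by ring] at this
  have e1 : ((n:ℝ) - 1/2) * x = ((n:ℝ) + 1/2) * x - x := by ring
  have e2 : ((n:ℝ) + 1) * y = ((n:ℝ) + 1/2) * y + y/2 := by ring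
  have e3 : (n:ℝ) * y = ((n:ℝ) + 1/2) * y - y/2 := by ring
  rw [e1, e2, e3, Real.cos_sub, Real.cos_add, Real.cos_sub, hsx]
  ring
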